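/- In the polynomial ring ℤ[T₁,T₂] in two indeterminates over the integers, for every integer y ≥ 1 one has the identity ∑_{t=0}^{y} (−1)^{t+1} · C(y,t) · (T₁+T₂)^{y−t} · (∑_{i=0}^{t} T₁^i · T₂^{t−i}) = ∑_{j=1}^{y−1} T₁^{y−j} · T₂^{j}, where C(y,t) is the binomial coefficient. -/

import Mathlib

open MvPolynomial

theorem sum_identity_poly (y : ℕ) (hy : 1 ≤ y) :
    ∑ t ∈ Finset.range (y + 1),
      (-1 : MvPolynomial (Fin 2) ℤ) ^ (t + 1) * (Nat.choose y t : MvPolynomial (Fin 2) ℤ) *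
        (X 0 + X 1) ^ (y - t) *
        (∑ i ∈ Finset.range (t + 1), (X 0 : MvPolynomial (Fin 2) ℤ) ^ i * X 1 ^ (t - i)) =
    ∑ j ∈ Finset.Icc 1 (y - 1), (X 0 : MvPolynomial (Fin 2) ℤ) ^ (y - j) * X 1 ^ j := by
  have hne : (X 0 - X 1 : MvPolynomial (Fin 2) ℤ) ≠ 0 := by
    rw [sub_ne_zero]
    intro h
    have := MvPolynomial.X_injective h
    simp at this
  apply mul_left_cancel₀ hne
  set a : MvPolynomial (Fin 2) ℤ := X 0 with ha
  set b : MvPolynomial (Fin 2) ℤ := X 1 with hb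
  have hkey : ∀ t : ℕ, (a - b) * (∑ i ∈ Finset.range (t+1), a ^ i * b ^ (t - i))
      = a ^ (t+1) - b ^ (t+1) := by
    intro t
    rw [mul_comm]
    simpa using geom_sum₂_mul a b (t+1)
  -- right-hand side telescopes
  have hright : (a - b) * ∑ j ∈ Finset.Icc 1 (y - 1), a ^ (y - j) * b ^ j
      = a ^ y * b - a * b ^ y := by
    have h1 : Finset.Icc 1 (y-1)
        = Finset.map ⟨fun i => i + 1, fun _ _ h => by simpa using h⟩ (Finset.range (y-1)) := by
      ext x
      simp only [Finset.mem_Icc, Finset.mem_map, Finset.mem_range, Function.Embedding.coeFn_mk]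
      constructor
      · rintro ⟨hx1, hx2⟩
        exact ⟨x - 1, by omega, by show x - 1 + 1 = x; omega⟩
      · rintro ⟨i, hi, rfl⟩
        show 1 ≤ i + 1 ∧ i + 1 ≤ y - 1
        omega
    rw [h1, Finset.sum_map, Finset.mul_sum]
    show ∑ i ∈ Finset.range (y-1), (a - b) * (a ^ (y - (i+1)) * b ^ (i+1)) = a ^ y * b - a * b ^ y
    have h2 : ∀ i ∈ Finset.range (y-1), (a - b) * (a ^ (y - (i+1)) * b ^ (i+1))
        = (fun i => a ^ (y - i) * b ^ (i+1)) i - (fun i => a ^ (y - i) * b ^ (i+1)) (i+1) := by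
      intro i hi
      simp only [Finset.mem_range] at hi
      have h3 : y - i = (y - (i+1)) + 1 := by omega
      simp only [h3]
      ring
    rw [Finset.sum_congr rfl h2, Finset.sum_range_sub' (fun i => a ^ (y - i) * b ^ (i+1))]
    have h4 : y - (y-1) = 1 := by omega
    simp only [Nat.sub_zero, h4]
    have hby : b ^ y = b * b ^ (y - 1) := by
      conv_lhs => rw [show y = (y - 1) + 1 by omega]
      rw [pow_succ']
    rw [hby]
    ring
  -- binomial theorem sums
  have hS : ∀ c : MvPolynomial (Fin 2) ℤ,
      ∑ t ∈ Finset.range (y+1),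
        (-c) ^ t * (a + b) ^ (y - t) * (Nat.choose y t : MvPolynomial (Fin 2) ℤ)
      = (-c + (a + b)) ^ y := by
    intro c
    rw [add_pow]
  rw [Finset.mul_sum]
  have hterm : ∀ t ∈ Finset.range (y+1),
      (a - b) * ((-1 : MvPolynomial (Fin 2) ℤ) ^ (t + 1) *
          (Nat.choose y t : MvPolynomial (Fin 2) ℤ) * (a + b) ^ (y - t) *
          (∑ i ∈ Finset.range (t + 1), a ^ i * b ^ (t - i)))
      = (-a) * ((-a) ^ t * (a + b) ^ (y - t) * (Nat.choose y t : MvPolynomial (Fin 2) ℤ))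
        + b * ((-b) ^ t * (a + b) ^ (y - t) * (Nat.choose y t : MvPolynomial (Fin 2) ℤ)) := by
    intro t _
    have h := hkey t
    calc (a - b) * ((-1 : MvPolynomial (Fin 2) ℤ) ^ (t + 1) *
          (Nat.choose y t : MvPolynomial (Fin 2) ℤ) * (a + b) ^ (y - t) *
          (∑ i ∈ Finset.range (t + 1), a ^ i * b ^ (t - i)))
        = (-1 : MvPolynomial (Fin 2) ℤ) ^ (t + 1) *
          (Nat.choose y t : MvPolynomial (Fin 2) ℤ) * (a + b) ^ (y - t) *
          ((a - b) * ∑ i ∈ Finset.range (t + 1), a ^ i * b ^ (t - i)) := by ring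
      _ = (-1 : MvPolynomial (Fin 2) ℤ) ^ (t + 1) *
          (Nat.choose y t : MvPolynomial (Fin 2) ℤ) * (a + b) ^ (y - t) *
          (a ^ (t+1) - b ^ (t+1)) := by rw [h]
      _ = (-a) * ((-a) ^ t * (a + b) ^ (y - t) * (Nat.choose y t : MvPolynomial (Fin 2) ℤ))
        + b * ((-b) ^ t * (a + b) ^ (y - t) * (Nat.choose y t : MvPolynomial (Fin 2) ℤ)) := by
          ring
  rw [Finset.sum_congr rfl hterm, Finset.sum_add_distrib, ← Finset.mul_sum, ← Finset.mul_sum,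
    hS a, hS b, hright]
  have e1 : (-a + (a + b)) = b := by ring
  have e2 : (-b + (a + b)) = a := by ring
  rw [e1, e2]
  ring
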